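/- Let $a_1 \leq \cdots \leq a_m$ be non-negative real numbers, and let $t$ be the smallest integer such that $\sum_{i=1}^{t}(a_t - a_i) \geq 4$ (set $t = m+1$ if no such integer exists). Let $\underline{r} = (r_1, \dots, r_m)$ with $r_1 \geq \cdots \geq r_m \geq 0$ and $\sum_i r_i = 1$ be a minimizer of $Q(r_1, \dots, r_m) = 2\sum_{i=1}^m r_i^2 + \sum_{i=1}^m a_i r_i$ over this simplex. Then $r_t = r_{t+1} = \cdots = r_m = 0$. -/

import Mathlib

open Finset

/-- Let `a_1 ≤ … ≤ a_m` be non-negative reals and let `t` be the smallest index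
such that `∑_{i=1}^t (a_t - a_i) ≥ 4` (if no such index exists the statement is vacuous).  If
`r = (r_1, …, r_m)`, with `r_1 ≥ … ≥ r_m ≥ 0` and `∑ r_i = 1`, minimizes
`Q(r) = 2 ∑ r_i² + ∑ a_i r_i` over the ordered simplex, then `r_t = r_{t+1} = … = r_m = 0`. -/
theorem stmt6 (m : ℕ) (a : Fin m → ℝ) (ha0 : ∀ i, 0 ≤ a i) (hamono : Monotone a)
    (t : Fin m)
    (ht : 4 ≤ ∑ i ∈ Finset.univ.filter (fun i => i ≤ t), (a t - a i))
    (htmin : ∀ t' : Fin m, t' < t →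
      ∑ i ∈ Finset.univ.filter (fun i => i ≤ t'), (a t' - a i) < 4)
    (r : Fin m → ℝ) (hr0 : ∀ i, 0 ≤ r i) (hrsum : ∑ i, r i = 1) (hrmono : Antitone r)
    (hrmin : ∀ r' : Fin m → ℝ, (∀ i, 0 ≤ r' i) → (∑ i, r' i = 1) → Antitone r' →
      2 * ∑ i, (r i) ^ 2 + ∑ i, a i * r i ≤ 2 * ∑ i, (r' i) ^ 2 + ∑ i, a i * r' i) :
    ∀ i, t ≤ i → r i = 0 := by
  classical
  have key : r t = 0 := by
    by_contra hne
    have hrt : 0 < r t := (hr0 t).lt_of_ne (Ne.symm hne)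
    set P : Finset (Fin m) := Finset.univ.filter (fun i => i < t) with hPdef
    set Pc : Finset (Fin m) := Finset.univ.filter (fun i => ¬ i < t) with hPcdef
    -- t.val > 0
    have htpos : 0 < (t : ℕ) := by
      by_contra h
      push_neg at h
      have hfil : Finset.univ.filter (fun i => i ≤ t) = {t} := by
        ext i
        simp only [Finset.mem_filter, Finset.mem_univ, true_and, Finset.mem_singleton]
        constructor
        · intro hi
          refine le_antisymm hi ?_
          rw [Fin.le_def]; omega
        · rintro rfl; exact le_refl _
      rw [hfil] at ht
      simp at ht
      linarith
    have hcard : P.card = (t : ℕ) := by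
      have : P = Finset.Iio t := by ext i; simp [hPdef]
      rw [this, Fin.card_Iio]
    set k : ℝ := ((t : ℕ) : ℝ) with hkdef
    have hkpos : 0 < k := by rw [hkdef]; exact_mod_cast htpos
    set T : ℝ := ∑ i ∈ Pc, r i with hTdef
    have hTpos : 0 < T := by
      have htmem : t ∈ Pc := by simp [hPcdef]
      have := Finset.single_le_sum (f := r) (fun i _ => hr0 i) htmem
      linarith
    set δ : ℝ := T / k with hδdef
    have hδpos : 0 < δ := div_pos hTpos hkpos
    have hkδ : k * δ = T := by
      rw [hδdef, mul_div_assoc', mul_comm, mul_div_assoc, div_self (ne_of_gt hkpos), mul_one]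
    set r' : Fin m → ℝ := fun i => if i < t then r i + δ else 0 with hr'def
    -- basic sums split
    have hsplit : ∀ f : Fin m → ℝ, ∑ i, f i = ∑ i ∈ P, f i + ∑ i ∈ Pc, f i := by
      intro f
      rw [hPdef, hPcdef, Finset.sum_filter_add_sum_filter_not]
    set H : ℝ := ∑ i ∈ P, r i with hHdef
    have hHT : H + T = 1 := by rw [hHdef, hTdef, ← hsplit, hrsum]
    -- r' properties
    have hr'0 : ∀ i, 0 ≤ r' i := by
      intro i
      simp only [hr'def]
      split
      · have := hr0 i; linarith
      · exact le_refl 0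
    have hr'P : ∀ i ∈ P, r' i = r i + δ := by
      intro i hi
      rw [hPdef, Finset.mem_filter] at hi
      simp only [hr'def, if_pos hi.2]
    have hr'Pc : ∀ i ∈ Pc, r' i = 0 := by
      intro i hi
      rw [hPcdef, Finset.mem_filter] at hi
      simp only [hr'def, if_neg hi.2]
    have hr'sum : ∑ i, r' i = 1 := by
      rw [hsplit, Finset.sum_congr rfl hr'P, Finset.sum_congr rfl hr'Pc,
        Finset.sum_add_distrib, Finset.sum_const, Finset.sum_const_zero, hcard]
      rw [nsmul_eq_mul, ← hkdef, hkδ]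
      linarith
    have hr'anti : Antitone r' := by
      intro i j hij
      simp only [hr'def]
      by_cases hi : i < t
      · by_cases hj : j < t
        · rw [if_pos hi, if_pos hj]
          have := hrmono hij
          linarith
        · rw [if_pos hi, if_neg hj]
          have := hr0 i
          linarith
      · have hj : ¬ j < t := fun hj => hi (lt_of_le_of_lt hij hj)
        rw [if_neg hi, if_neg hj]
    -- the minimality inequality
    have hmin := hrmin r' hr'0 hr'sum hr'anti
    -- compute all the sums
    set A : ℝ := ∑ i ∈ P, a i with hAdef
    set B : ℝ := ∑ i ∈ Pc, a i * r i with hBdef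
    set S2 : ℝ := ∑ i ∈ Pc, (r i) ^ 2 with hS2def
    -- key facts about a
    have hka : 4 + A ≤ k * a t := by
      have hfil : Finset.univ.filter (fun i => i ≤ t) = insert t P := by
        ext i
        simp only [Finset.mem_filter, Finset.mem_univ, true_and, Finset.mem_insert, hPdef]
        constructor
        · intro hi
          rcases eq_or_lt_of_le hi with h | h
          · left; exact h
          · right; simpa using h
        · rintro (rfl | hi)
          · exact le_refl _
          · exact le_of_lt hi
      have htP : t ∉ P := by simp [hPdef]
      rw [hfil, Finset.sum_insert htP] at ht
      have hsub : ∑ i ∈ P, (a t - a i) = k * a t - A := by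
        rw [Finset.sum_sub_distrib, Finset.sum_const, hcard, nsmul_eq_mul, hAdef, hkdef]
      rw [hsub] at ht
      linarith
    have hB : a t * T ≤ B := by
      rw [hBdef, hTdef, Finset.mul_sum]
      apply Finset.sum_le_sum
      intro i hi
      rw [hPcdef, Finset.mem_filter] at hi
      have hat : a t ≤ a i := hamono (not_lt.mp hi.2)
      exact mul_le_mul_of_nonneg_right hat (hr0 i)
    have hS2nn : 0 ≤ S2 := Finset.sum_nonneg fun i _ => sq_nonneg _
    -- expand hmin
    have e1 : ∑ i, (r i) ^ 2 = (∑ i ∈ P, (r i) ^ 2) + S2 := hsplit _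
    have e2 : ∑ i, a i * r i = (∑ i ∈ P, a i * r i) + B := hsplit _
    have e3 : ∑ i, (r' i) ^ 2 = (∑ i ∈ P, (r i) ^ 2) + 2 * δ * H + k * δ ^ 2 := by
      rw [hsplit]
      have c1 : ∑ i ∈ Pc, (r' i) ^ 2 = 0 := by
        apply Finset.sum_eq_zero
        intro i hi
        rw [hr'Pc i hi]; ring
      have c2 : ∑ i ∈ P, (r' i) ^ 2 = ∑ i ∈ P, ((r i) ^ 2 + 2 * δ * r i + δ ^ 2) := by
        apply Finset.sum_congr rfl
        intro i hi
        rw [hr'P i hi]; ring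
      rw [c1, c2, Finset.sum_add_distrib, Finset.sum_add_distrib, Finset.sum_const, hcard,
        ← Finset.mul_sum, ← hHdef, nsmul_eq_mul, ← hkdef]
      ring
    have e4 : ∑ i, a i * r' i = (∑ i ∈ P, a i * r i) + δ * A := by
      rw [hsplit]
      have c1 : ∑ i ∈ Pc, a i * r' i = 0 := by
        apply Finset.sum_eq_zero
        intro i hi
        rw [hr'Pc i hi]; ring
      have c2 : ∑ i ∈ P, a i * r' i = ∑ i ∈ P, (a i * r i + δ * a i) := by
        apply Finset.sum_congr rfl
        intro i hi
        rw [hr'P i hi]; ring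
      rw [c1, c2, Finset.sum_add_distrib, ← Finset.mul_sum, ← hAdef]
      ring
    rw [e1, e2, e3, e4] at hmin
    -- final contradiction
    have hkδ2 : k * δ ^ 2 = δ * T := by
      rw [pow_two, ← mul_assoc, hkδ]; ring
    have h5 : δ * H = δ - δ * T := by
      have hH : H = 1 - T := by linarith
      rw [hH]; ring
    have hB' : 4 * δ + δ * A ≤ a t * T := by
      have := mul_le_mul_of_nonneg_right hka (le_of_lt hδpos)
      have hh : k * a t * δ = a t * T := by rw [mul_comm k (a t), mul_assoc, hkδ]
      nlinarith
    have hδT : 0 < δ * T := mul_pos hδpos hTpos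
    linarith
  intro i hti
  exact le_antisymm (key ▸ hrmono hti) (hr0 i)
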